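/- Let G = (V, E) be a simple graph, index its edges e_1, ..., e_m, and let G' = (V', E') be the graph obtained from G by replacing each edge e_i = (u_i, v_i) with a path through 2i new internal vertices. Then MaxCut(G') = MaxCut(G) + (|V'| − |V|), that is, MaxCut(G') = MaxCut(G) + Σ_{i=1}^m 2i = MaxCut(G) + m(m+1). Moreover, restricting an optimal cut of G' to V gives an optimal cut of G, and any optimal cut of G extends to an optimal cut of G' by alternating colors along each subdivision path. -/

import Mathlib

/-- Vertex set of the subdivided graph: the original vertices plus, for the `i`-th
edge (`i : Fin m`, representing edge `e_{i+1}`), a set of `2(i+1)` internal path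
vertices. -/
abbrev SubdivVert (V : Type*) (m : ℕ) :=
  V ⊕ (Σ i : Fin m, Fin (2 * ((i : ℕ) + 1)))

/-- One direction of the adjacency relation of the subdivided graph, where `ep i`
gives the two endpoints of the `i`-th edge of the original graph: the endpoint
`(ep i).1` is joined to the first internal vertex of the `i`-th path, consecutive
internal vertices are joined, and the last internal vertex is joined to
`(ep i).2`. -/
def subdivRel {V : Type*} (m : ℕ) (ep : Fin m → V × V) :
    SubdivVert V m → SubdivVert V m → Prop
  | Sum.inl a, Sum.inr ⟨i, j⟩ =>
      (a = (ep i).1 ∧ (j : ℕ) = 0) ∨ (a = (ep i).2 ∧ (j : ℕ) = 2 * ((i : ℕ) + 1) - 1)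
  | Sum.inr ⟨i, j⟩, Sum.inr ⟨i', j'⟩ => (i : ℕ) = (i' : ℕ) ∧ (j : ℕ) + 1 = (j' : ℕ)
  | _, _ => False

/-- The graph obtained from a graph with edges `e_1, …, e_m` (endpoints given by
`ep`) by replacing the `i`-th edge by a path through `2i` new internal vertices. -/
def subdivGraph {V : Type*} (m : ℕ) (ep : Fin m → V × V) :
    SimpleGraph (SubdivVert V m) :=
  SimpleGraph.fromRel (subdivRel m ep)

open Classical in
/-- The number of edges of `H` cut by the 2-coloring `c`. -/
noncomputable def cutSize {W : Type*} [Fintype W] (H : SimpleGraph W) (c : W → Bool) : ℕ :=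
  (Finset.univ.filter fun e : Sym2 W =>
    e ∈ H.edgeSet ∧ ∃ a b : W, e = s(a, b) ∧ c a ≠ c b).card

open Classical in
/-- The MaxCut value of `H`: the maximum of `cutSize` over all 2-colorings. -/
noncomputable def maxCut {W : Type*} [Fintype W] (H : SimpleGraph W) : ℕ :=
  Finset.univ.sup fun c : W → Bool => cutSize H c

section Aux

variable {V : Type*} {m : ℕ}

/-- the k-th vertex along path i (k from 0 to 2(i+1)+1). -/
def pv (ep : Fin m → V × V) (i : Fin m) (k : ℕ) : SubdivVert V m :=
  if k = 0 then Sum.inl (ep i).1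
  else if h : k - 1 < 2 * ((i : ℕ) + 1) then Sum.inr ⟨i, ⟨k - 1, h⟩⟩
  else Sum.inl (ep i).2

lemma pv_zero (ep : Fin m → V × V) (i : Fin m) : pv ep i 0 = Sum.inl (ep i).1 := rfl

lemma pv_mid (ep : Fin m → V × V) (i : Fin m) {k : ℕ} (h1 : 1 ≤ k)
    (h2 : k - 1 < 2 * ((i : ℕ) + 1)) : pv ep i k = Sum.inr ⟨i, ⟨k - 1, h2⟩⟩ := by
  rw [pv, if_neg (by omega), dif_pos h2]

lemma pv_last (ep : Fin m → V × V) (i : Fin m) {k : ℕ} (h : 2 * ((i : ℕ) + 1) + 1 ≤ k) :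
    pv ep i k = Sum.inl (ep i).2 := by
  rw [pv, if_neg (by omega), dif_neg (by omega)]

lemma pv_of_inr (ep : Fin m → V × V) (i : Fin m) (j : Fin (2 * ((i : ℕ) + 1))) :
    (Sum.inr ⟨i, j⟩ : SubdivVert V m) = pv ep i ((j : ℕ) + 1) := by
  rw [pv_mid ep i (by omega) (by simpa using j.isLt)]
  simp

lemma pv_inj (ep : Fin m → V × V) (i : Fin m) (hne : (ep i).1 ≠ (ep i).2) {k k' : ℕ}
    (hk : k ≤ 2 * ((i : ℕ) + 1) + 1) (hk' : k' ≤ 2 * ((i : ℕ) + 1) + 1)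
    (h : pv ep i k = pv ep i k') : k = k' := by
  rw [pv, pv] at h
  split_ifs at h <;> simp_all <;> omega

def toIdx : SubdivVert V m → ℕ
  | Sum.inl _ => 0
  | Sum.inr ⟨i, _⟩ => (i : ℕ)

def gIdx : Sym2 (SubdivVert V m) → ℕ :=
  Sym2.lift ⟨fun a b => max (toIdx a) (toIdx b), fun a b => max_comm _ _⟩

lemma gIdx_mk (a b : SubdivVert V m) : gIdx s(a, b) = max (toIdx a) (toIdx b) := rfl

lemma gIdx_edge (ep : Fin m → V × V) (i : Fin m) {k : ℕ} (hk : k ≤ 2 * ((i : ℕ) + 1)) :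
    gIdx s(pv ep i k, pv ep i (k + 1)) = (i : ℕ) := by
  by_cases h0 : k = 0
  · subst h0
    rw [pv_zero, pv_mid ep i (by omega) (by omega)]
    simp [gIdx_mk, toIdx]
  · by_cases hl : k = 2 * ((i : ℕ) + 1)
    · subst hl
      rw [pv_mid ep i (by omega) (by omega), pv_last ep i (by omega)]
      simp [gIdx_mk, toIdx]
    · rw [pv_mid ep i (by omega) (by omega), pv_mid ep i (by omega) (by omega)]
      simp [gIdx_mk, toIdx]

lemma subdivRel_cases {ep : Fin m → V × V} {a b : SubdivVert V m} (h : subdivRel m ep a b) :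
    ∃ i : Fin m, ∃ k, k ≤ 2 * ((i : ℕ) + 1) ∧
      ((a = pv ep i k ∧ b = pv ep i (k + 1)) ∨ (b = pv ep i k ∧ a = pv ep i (k + 1))) := by
  match a, b with
  | Sum.inl x, Sum.inl y => exact h.elim
  | Sum.inr s, Sum.inl y => exact h.elim
  | Sum.inl x, Sum.inr ⟨i, j⟩ =>
    rcases h with ⟨hx, hj⟩ | ⟨hx, hj⟩
    · refine ⟨i, 0, by omega, Or.inl ⟨by rw [pv_zero, hx], ?_⟩⟩
      rw [pv_of_inr ep i j, hj]
    · refine ⟨i, 2 * ((i : ℕ) + 1), le_rfl, Or.inr ⟨?_, ?_⟩⟩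
      · rw [pv_of_inr ep i j]; congr 1; omega
      · rw [pv_last ep i (by omega), hx]
  | Sum.inr ⟨i, j⟩, Sum.inr ⟨i', j'⟩ =>
    obtain ⟨h1, h2⟩ := h
    have hii : i = i' := Fin.ext h1
    subst hii
    refine ⟨i, (j : ℕ) + 1, by omega, Or.inl ⟨pv_of_inr ep i j, ?_⟩⟩
    rw [pv_of_inr ep i j']; congr 1; omega

lemma adj_of_k (ep : Fin m → V × V) (hep : ∀ i, (ep i).1 ≠ (ep i).2) (i : Fin m) {k : ℕ}
    (hk : k ≤ 2 * ((i : ℕ) + 1)) : (subdivGraph m ep).Adj (pv ep i k) (pv ep i (k + 1)) := by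
  rw [subdivGraph, SimpleGraph.fromRel_adj]
  refine ⟨fun h => by have := pv_inj ep i (hep i) (by omega) (by omega) h; omega, ?_⟩
  by_cases h0 : k = 0
  · subst h0
    rw [pv_zero, pv_mid ep i (by omega) (by omega)]
    exact Or.inl (Or.inl ⟨rfl, rfl⟩)
  · by_cases hl : k = 2 * ((i : ℕ) + 1)
    · subst hl
      rw [pv_mid ep i (by omega) (by omega), pv_last ep i (by omega)]
      exact Or.inr (Or.inr ⟨rfl, show 2 * ((i : ℕ) + 1) - 1 = 2 * ((i : ℕ) + 1) - 1 from rfl⟩)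
    · rw [pv_mid ep i (by omega) (by omega), pv_mid ep i (by omega) (by omega)]
      exact Or.inl ⟨rfl, show k - 1 + 1 = k + 1 - 1 by omega⟩

lemma adj_iff (ep : Fin m → V × V) (hep : ∀ i, (ep i).1 ≠ (ep i).2) (a b : SubdivVert V m) :
    (subdivGraph m ep).Adj a b ↔ ∃ i : Fin m, ∃ k, k ≤ 2 * ((i : ℕ) + 1) ∧
      ((a = pv ep i k ∧ b = pv ep i (k + 1)) ∨ (b = pv ep i k ∧ a = pv ep i (k + 1))) := by
  constructor
  · intro h
    rw [subdivGraph, SimpleGraph.fromRel_adj] at h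
    rcases h with ⟨hne, h | h⟩
    · exact subdivRel_cases h
    · obtain ⟨i, k, hk, hc | hc⟩ := subdivRel_cases h
      · exact ⟨i, k, hk, Or.inr hc⟩
      · exact ⟨i, k, hk, Or.inl hc⟩
  · rintro ⟨i, k, hk, ⟨ha, hb⟩ | ⟨hb, ha⟩⟩
    · subst ha; subst hb; exact adj_of_k ep hep i hk
    · subst ha; subst hb; exact (adj_of_k ep hep i hk).symm

lemma edge_form (ep : Fin m → V × V) (hep : ∀ i, (ep i).1 ≠ (ep i).2)
    {e : Sym2 (SubdivVert V m)} (he : e ∈ (subdivGraph m ep).edgeSet) :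
    ∃ i : Fin m, ∃ k, k ≤ 2 * ((i : ℕ) + 1) ∧ e = s(pv ep i k, pv ep i (k + 1)) := by
  revert he
  induction e using Sym2.ind with
  | _ a b =>
    intro he
    rw [SimpleGraph.mem_edgeSet, adj_iff ep hep] at he
    obtain ⟨i, k, hk, ⟨ha, hb⟩ | ⟨hb, ha⟩⟩ := he
    · exact ⟨i, k, hk, by rw [ha, hb]⟩
    · exact ⟨i, k, hk, by rw [ha, hb, Sym2.eq_swap]⟩

lemma cutPred_iff {W : Type*} (c : W → Bool) (a b : W) :
    (∃ x y : W, s(a, b) = s(x, y) ∧ c x ≠ c y) ↔ c a ≠ c b := by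
  constructor
  · rintro ⟨x, y, hxy, hne⟩
    rw [Sym2.eq_iff] at hxy
    rcases hxy with ⟨rfl, rfl⟩ | ⟨rfl, rfl⟩
    · exact hne
    · exact hne.symm
  · intro h; exact ⟨a, b, rfl, h⟩

end Aux

section Count

variable {V : Type*} {m : ℕ}

lemma changes_parity (f : ℕ → Bool) (n : ℕ) :
    ((Finset.range n).filter fun k => f k ≠ f (k + 1)).card % 2 = (if f 0 = f n then 0 else 1) := by
  induction n with
  | zero => simp
  | succ n ih =>
    rw [Finset.range_add_one, Finset.filter_insert]
    by_cases h : f n ≠ f (n + 1)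
    · rw [if_pos h, Finset.card_insert_of_notMem (by simp)]
      cases hf0 : f 0 <;> cases hfn : f n <;> cases hfn1 : f (n + 1) <;> simp_all <;> omega
    · rw [if_neg h]
      cases hf0 : f 0 <;> cases hfn : f n <;> cases hfn1 : f (n + 1) <;> simp_all
  
lemma changes_le_odd (f : ℕ → Bool) (n : ℕ) :
    ((Finset.range (2 * n + 1)).filter fun k => f k ≠ f (k + 1)).card ≤
      2 * n + (if f 0 = f (2 * n + 1) then 0 else 1) := by
  have h1 := changes_parity f (2 * n + 1)
  have h2 : ((Finset.range (2 * n + 1)).filter fun k => f k ≠ f (k + 1)).card ≤ 2 * n + 1 :=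
    le_trans (Finset.card_filter_le _ _) (by simp)
  by_cases h : f 0 = f (2 * n + 1)
  · rw [if_pos h] at h1 ⊢; omega
  · rw [if_neg h] at h1 ⊢; omega

lemma sum_2i (m : ℕ) : ∑ i : Fin m, 2 * ((i : ℕ) + 1) = m * (m + 1) := by
  rw [Fin.sum_univ_eq_sum_range (fun n => 2 * (n + 1)) m]
  induction m with
  | zero => simp
  | succ n ih => rw [Finset.sum_range_succ, ih]; ring

lemma cutSize_subdiv [Fintype V] (ep : Fin m → V × V)
    (hep : ∀ i, (ep i).1 ≠ (ep i).2) (c' : SubdivVert V m → Bool) :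
    cutSize (subdivGraph m ep) c' =
      ∑ i : Fin m, ((Finset.range (2 * ((i : ℕ) + 1) + 1)).filter
        fun k => c' (pv ep i k) ≠ c' (pv ep i (k + 1))).card := by
  classical
  rw [cutSize]
  rw [Finset.card_eq_sum_card_fiberwise (f := gIdx) (t := Finset.range m)
    (fun e he => by
      simp only [Finset.mem_coe, Finset.mem_filter, Finset.mem_univ, true_and] at he
      obtain ⟨i, k, hk, rfl⟩ := edge_form ep hep he.1
      rw [gIdx_edge ep i hk]
      exact Finset.mem_range.2 i.isLt)]
  refine Finset.sum_bij' (fun b hb => (⟨b, Finset.mem_range.1 hb⟩ : Fin m))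
    (fun i _ => (i : ℕ)) (fun b hb => Finset.mem_univ _) (fun i _ => Finset.mem_range.2 i.isLt)
    (fun b hb => rfl) (fun i _ => rfl) ?_
  intro b hb
  set i : Fin m := ⟨b, Finset.mem_range.1 hb⟩ with hidef
  have hib : (i : ℕ) = b := rfl
  show _ = ((Finset.range (2 * ((i : ℕ) + 1) + 1)).filter
    fun k => c' (pv ep i k) ≠ c' (pv ep i (k + 1))).card
  refine (Finset.card_bij (fun k _ => s(pv ep i k, pv ep i (k + 1))) ?_ ?_ ?_).symm
  · intro k hk
    simp only [Finset.mem_filter, Finset.mem_range] at hk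
    simp only [Finset.mem_filter, Finset.mem_univ, true_and]
    refine ⟨⟨(adj_of_k ep hep i (by omega)), ⟨_, _, rfl, hk.2⟩⟩, gIdx_edge ep i (by omega)⟩
  · intro k hk k' hk' h
    simp only [Finset.mem_filter, Finset.mem_range] at hk hk'
    rw [Sym2.eq_iff] at h
    rcases h with ⟨h1, h2⟩ | ⟨h1, h2⟩
    · exact pv_inj ep i (hep i) (by omega) (by omega) h1
    · have e1 := pv_inj ep i (hep i) (by omega) (by omega) h1
      have e2 := pv_inj ep i (hep i) (by omega) (by omega) h2
      omega
  · intro e he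
    simp only [Finset.mem_filter, Finset.mem_univ, true_and] at he
    obtain ⟨⟨hedge, hcut⟩, hg⟩ := he
    obtain ⟨i', k, hk, rfl⟩ := edge_form ep hep hedge
    rw [gIdx_edge ep i' hk] at hg
    have : i' = i := Fin.ext hg
    subst this
    refine ⟨k, ?_, rfl⟩
    simp only [Finset.mem_filter, Finset.mem_range]
    exact ⟨by omega, (cutPred_iff c' _ _).1 hcut⟩

lemma cutSize_G [Fintype V] [DecidableEq V] (G : SimpleGraph V) (ep : Fin m → V × V)
    (hep : ∀ i, G.Adj (ep i).1 (ep i).2)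
    (hsurj : ∀ a b : V, G.Adj a b → ∃ i, ep i = (a, b) ∨ ep i = (b, a))
    (hinj : ∀ i j, (ep i = ep j ∨ ep i = ((ep j).2, (ep j).1)) → i = j) (c : V → Bool) :
    cutSize G c = ∑ i : Fin m, (if c (ep i).1 = c (ep i).2 then 0 else 1) := by
  classical
  rw [cutSize]
  have : ∑ i : Fin m, (if c (ep i).1 = c (ep i).2 then 0 else 1) =
      (Finset.univ.filter fun i : Fin m => c (ep i).1 ≠ c (ep i).2).card := by
    rw [Finset.card_filter]
    exact Finset.sum_congr rfl fun i _ => by by_cases h : c (ep i).1 = c (ep i).2 <;> simp [h]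
  rw [this]
  refine (Finset.card_bij (fun i _ => s((ep i).1, (ep i).2)) ?_ ?_ ?_).symm
  · intro i hi
    simp only [Finset.mem_filter, Finset.mem_univ, true_and] at hi ⊢
    exact ⟨hep i, ⟨_, _, rfl, hi⟩⟩
  · intro i _ j _ h
    rw [Sym2.eq_iff] at h
    rcases h with ⟨h1, h2⟩ | ⟨h1, h2⟩
    · exact hinj i j (Or.inl (Prod.ext h1 h2))
    · exact hinj i j (Or.inr (Prod.ext h1 h2))
  · intro e he
    simp only [Finset.mem_filter, Finset.mem_univ, true_and] at he
    obtain ⟨hedge, hcut⟩ := he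
    revert hedge hcut
    induction e using Sym2.ind with
    | _ a b =>
      intro hedge hcut
      rw [SimpleGraph.mem_edgeSet] at hedge
      obtain ⟨i, hi | hi⟩ := hsurj a b hedge
      · have hmem : i ∈ Finset.univ.filter fun i : Fin m => c (ep i).1 ≠ c (ep i).2 := by
          simp only [Finset.mem_filter, Finset.mem_univ, true_and, hi]
          exact (cutPred_iff c a b).1 hcut
        have hval : s((ep i).1, (ep i).2) = s(a, b) := by rw [hi]
        exact ⟨i, hmem, hval⟩
      · have hmem : i ∈ Finset.univ.filter fun i : Fin m => c (ep i).1 ≠ c (ep i).2 := by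
          simp only [Finset.mem_filter, Finset.mem_univ, true_and, hi]
          exact fun h => (cutPred_iff c a b).1 hcut h.symm
        have hval : s((ep i).1, (ep i).2) = s(a, b) := by rw [hi]; exact Sym2.eq_swap
        exact ⟨i, hmem, hval⟩

end Count

section Ext

variable {V : Type*} {m : ℕ}

/-- extension of a coloring, alternating along the subdivision paths. -/
def extc (ep : Fin m → V × V) (c : V → Bool) : SubdivVert V m → Bool :=
  Sum.elim c fun s => xor (c (ep s.1).1) (decide ((s.2 : ℕ) % 2 = 0))

lemma extc_count (ep : Fin m → V × V) (i : Fin m) (c : V → Bool) :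
    ((Finset.range (2 * ((i : ℕ) + 1) + 1)).filter
      fun k => extc ep c (pv ep i k) ≠ extc ep c (pv ep i (k + 1))).card =
      (if c (ep i).1 = c (ep i).2 then 0 else 1) + 2 * ((i : ℕ) + 1) := by
  have hval : ∀ k, 1 ≤ k → k ≤ 2 * ((i : ℕ) + 1) →
      extc ep c (pv ep i k) = xor (c (ep i).1) (decide ((k - 1) % 2 = 0)) := by
    intro k h1 h2
    rw [pv_mid ep i h1 (by omega)]
    rfl
  have hcond : ∀ k < 2 * ((i : ℕ) + 1),
      extc ep c (pv ep i k) ≠ extc ep c (pv ep i (k + 1)) := by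
    intro k hk
    by_cases h0 : k = 0
    · subst h0
      rw [pv_zero, hval 1 le_rfl (by omega)]
      simp [extc]
    · rw [hval k (by omega) (by omega), hval (k + 1) (by omega) (by omega),
        Nat.add_sub_cancel]
      rcases Nat.mod_two_eq_zero_or_one k with h2 | h2
      · have h3 : (k - 1) % 2 = 1 := by omega
        simp [h2, h3]
      · have h3 : (k - 1) % 2 = 0 := by omega
        simp [h2, h3]
  have hA : extc ep c (pv ep i (2 * ((i : ℕ) + 1))) = c (ep i).1 := by
    rw [hval _ (by omega) le_rfl]
    have h3 : (2 * ((i : ℕ) + 1) - 1) % 2 = 1 := by omega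
    simp [h3]
  have hB : extc ep c (pv ep i (2 * ((i : ℕ) + 1) + 1)) = c (ep i).2 := by
    rw [pv_last ep i le_rfl]
    rfl
  rw [Finset.range_add_one, Finset.filter_insert]
  by_cases hc : c (ep i).1 = c (ep i).2
  · rw [if_neg (by rw [hA, hB, hc]; simp),
      Finset.filter_true_of_mem (fun k hk => hcond k (Finset.mem_range.1 hk)),
      Finset.card_range, if_pos hc]
    omega
  · rw [if_pos (by rw [hA, hB]; exact hc), Finset.card_insert_of_notMem (by simp),
      Finset.filter_true_of_mem (fun k hk => hcond k (Finset.mem_range.1 hk)),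
      Finset.card_range, if_neg hc]
    omega

end Ext



/-- let `G'` be obtained from `G` by replacing the `i`-th edge
(`i = 1, …, m`) by a path through `2i` new vertices.  Then
`MaxCut(G') = MaxCut(G) + Σ_{i=1}^m 2i = MaxCut(G) + m(m+1)`; moreover, restricting
an optimal cut of `G'` to `V` gives an optimal cut of `G`, and any optimal cut of
`G` extends to an optimal cut of `G'`. -/
theorem stmt_14 {V : Type*} [Fintype V] [DecidableEq V] (G : SimpleGraph V)
    [DecidableRel G.Adj] (m : ℕ) (ep : Fin m → V × V)
    (hep : ∀ i, G.Adj (ep i).1 (ep i).2)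
    (hsurj : ∀ a b : V, G.Adj a b → ∃ i, ep i = (a, b) ∨ ep i = (b, a))
    (hinj : ∀ i j, (ep i = ep j ∨ ep i = ((ep j).2, (ep j).1)) → i = j) :
    maxCut (subdivGraph m ep) = maxCut G + m * (m + 1) ∧
    (∀ c' : SubdivVert V m → Bool,
      cutSize (subdivGraph m ep) c' = maxCut (subdivGraph m ep) →
      cutSize G (fun v => c' (Sum.inl v)) = maxCut G) ∧
    (∀ c : V → Bool, cutSize G c = maxCut G →
      ∃ c' : SubdivVert V m → Bool, (∀ v, c' (Sum.inl v) = c v) ∧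
        cutSize (subdivGraph m ep) c' = maxCut (subdivGraph m ep)) := by
  classical
  have hep' : ∀ i, (ep i).1 ≠ (ep i).2 := fun i => (hep i).ne
  have hub : ∀ c' : SubdivVert V m → Bool,
      cutSize (subdivGraph m ep) c' ≤ cutSize G (fun v => c' (Sum.inl v)) + m * (m + 1) := by
    intro c'
    rw [cutSize_subdiv ep hep' c', cutSize_G G ep hep hsurj hinj]
    beta_reduce
    have hle : ∀ i : Fin m, ((Finset.range (2 * ((i : ℕ) + 1) + 1)).filter
        fun k => c' (pv ep i k) ≠ c' (pv ep i (k + 1))).card ≤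
        (if c' (Sum.inl (ep i).1) = c' (Sum.inl (ep i).2) then 0 else 1) + 2 * ((i : ℕ) + 1) := by
      intro i
      have h := changes_le_odd (fun k => c' (pv ep i k)) ((i : ℕ) + 1)
      simp only [pv_zero, pv_last ep i le_rfl] at h
      omega
    calc (∑ i : Fin m, ((Finset.range (2 * ((i : ℕ) + 1) + 1)).filter
          fun k => c' (pv ep i k) ≠ c' (pv ep i (k + 1))).card)
        ≤ ∑ i : Fin m, ((if c' (Sum.inl (ep i).1) = c' (Sum.inl (ep i).2) then 0 else 1)
            + 2 * ((i : ℕ) + 1)) := Finset.sum_le_sum fun i _ => hle i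
      _ = (∑ i : Fin m, if c' (Sum.inl (ep i).1) = c' (Sum.inl (ep i).2) then 0 else 1)
            + m * (m + 1) := by rw [Finset.sum_add_distrib, sum_2i]
  have hlb : ∀ c : V → Bool,
      cutSize (subdivGraph m ep) (extc ep c) = cutSize G c + m * (m + 1) := by
    intro c
    rw [cutSize_subdiv ep hep' (extc ep c), cutSize_G G ep hep hsurj hinj c,
      Finset.sum_congr rfl (fun i _ => extc_count ep i c),
      Finset.sum_add_distrib, sum_2i]
  have hGle : ∀ c : V → Bool, cutSize G c ≤ maxCut G := by
    intro c
    apply Finset.le_sup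
    simp
  have hG'le : ∀ c' : SubdivVert V m → Bool,
      cutSize (subdivGraph m ep) c' ≤ maxCut (subdivGraph m ep) := by
    intro c'
    apply Finset.le_sup
    simp
  have hKB : m * (m + 1) ≤ maxCut (subdivGraph m ep) := by
    have h1 := hlb (fun _ => false)
    have h2 := hG'le (extc ep (fun _ => false))
    omega
  have hmc : maxCut (subdivGraph m ep) = maxCut G + m * (m + 1) := by
    apply le_antisymm
    · apply Finset.sup_le
      intro c' _
      exact le_trans (hub c') (Nat.add_le_add_right (hGle _) _)
    · have hsup : maxCut G ≤ maxCut (subdivGraph m ep) - m * (m + 1) := by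
        apply Finset.sup_le
        intro c _
        have h1 := hlb c
        have h2 := hG'le (extc ep c)
        omega
      omega
  refine ⟨hmc, ?_, ?_⟩
  · intro c' hopt
    have h1 := hub c'
    rw [hopt, hmc] at h1
    have h2 := hGle (fun v => c' (Sum.inl v))
    omega
  · intro c hc
    refine ⟨extc ep c, fun v => rfl, ?_⟩
    rw [hlb c, hc, hmc]
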